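/- If n is a composite positive integer and p is the smallest prime divisor of n, then T(n) < 1 + T(n−1) + (2⌊√n⌋ − 2)·T(n/p − 1). -/

import Mathlib

/-- `f (a₁,…,a_k)` defined by `f(a₁) = a₁`, `f(a₁,…,a_{i+1}) = (f(a₁,…,a_i) + 1) · a_{i+1}`. -/
def f (l : List ℕ) : ℕ := l.foldl (fun acc a => (acc + 1) * a) 0

/-- `T n` is the number of nonempty finite sequences of positive integers with `f A = n`,
with the additional convention `T 0 = 1`. -/
noncomputable def T : ℕ → ℕ
  | 0 => 1
  | n + 1 => Nat.card {l : List ℕ // l ≠ [] ∧ (∀ a ∈ l, 0 < a) ∧ f l = n + 1}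

namespace TAux

/-- The set of sequences counted by `T n` (for `n ≥ 1`). -/
def S (n : ℕ) : Set (List ℕ) := {l | l ≠ [] ∧ (∀ a ∈ l, 0 < a) ∧ f l = n}

lemma f_concat (l : List ℕ) (a : ℕ) : f (l ++ [a]) = (f l + 1) * a := by
  simp [f, List.foldl_append]

lemma f_bounds (l : List ℕ) (hpos : ∀ a ∈ l, 0 < a) :
    l.length ≤ f l ∧ ∀ a ∈ l, a ≤ f l := by
  induction l using List.reverseRecOn with
  | nil => simp [f]
  | append_singleton B b ih =>
    have hB : ∀ a ∈ B, 0 < a := fun a ha => hpos a (by simp [ha])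
    have hb : 0 < b := hpos b (by simp)
    obtain ⟨ih1, ih2⟩ := ih hB
    rw [f_concat]
    constructor
    · have : f B + 1 ≤ (f B + 1) * b := Nat.le_mul_of_pos_right _ hb
      simp only [List.length_append, List.length_singleton]
      omega
    · intro a ha
      rcases List.mem_append.1 ha with ha | ha
      · have := ih2 a ha
        have : f B + 1 ≤ (f B + 1) * b := Nat.le_mul_of_pos_right _ hb
        omega
      · have : a = b := by simpa using ha
        subst this
        calc a = 1 * a := (one_mul a).symm
        _ ≤ (f B + 1) * a := Nat.mul_le_mul_right a (by omega)

lemma f_pos (l : List ℕ) (hl : l ≠ []) (hpos : ∀ a ∈ l, 0 < a) : 0 < f l := by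
  have := (f_bounds l hpos).1
  have : 0 < l.length := List.length_pos_iff.2 hl
  omega

lemma f_append_replicate (l : List ℕ) (k : ℕ) :
    f (l ++ List.replicate k 1) = f l + k := by
  induction k with
  | zero => simp
  | succ k ih =>
    have : List.replicate (k + 1) 1 = List.replicate k 1 ++ [1] := by
      simp [List.replicate_succ' ]
    rw [this, ← List.append_assoc, f_concat, ih]
    ring

lemma S_finite (n : ℕ) : (S n).Finite := by
  classical
  set φ : List ℕ → List (Fin (n + 1)) :=
    fun l => l.map (fun a => (⟨a % (n + 1), Nat.mod_lt _ (by omega)⟩ : Fin (n + 1))) with hφ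
  have unmap : ∀ L : List ℕ, (∀ a ∈ L, a < n + 1) →
      (φ L).map (fun x : Fin (n + 1) => (x : ℕ)) = L := by
    intro L hL
    rw [hφ, List.map_map]
    conv_rhs => rw [← List.map_id L]
    apply List.map_congr_left
    intro a ha
    simp [Nat.mod_eq_of_lt (hL a ha)]
  have hbound : ∀ l ∈ S n, ∀ a ∈ l, a < n + 1 := by
    intro l hl a ha
    have h1 := (f_bounds l hl.2.1).2 a ha
    have h2 := hl.2.2
    omega
  have hsub : φ '' S n ⊆ {l : List (Fin (n + 1)) | l.length ≤ n} := by
    rintro _ ⟨l, hl, rfl⟩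
    have h1 := (f_bounds l hl.2.1).1
    have h2 := hl.2.2
    simp only [Set.mem_setOf_eq, hφ, List.length_map]
    omega
  refine Set.Finite.of_finite_image (Set.Finite.subset (List.finite_length_le _ n) hsub) ?_
  intro l hl l' hl' h
  rw [← unmap l (hbound l hl), ← unmap l' (hbound l' hl'), h]

lemma T_eq_ncard (n : ℕ) (h : n ≠ 0) : T n = (S n).ncard := by
  obtain ⟨m, rfl⟩ := Nat.exists_eq_succ_of_ne_zero h
  show Nat.card _ = _
  rw [← Nat.card_coe_set_eq]
  rfl

lemma singleton_mem_S (n : ℕ) (h : 1 ≤ n) : [n] ∈ S n := by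
  refine ⟨by simp, by simp; omega, ?_⟩
  simp [f]

lemma one_le_ncard_S (n : ℕ) (h : 1 ≤ n) : 1 ≤ (S n).ncard := by
  have := (Set.ncard_pos (S_finite n)).2 ⟨[n], singleton_mem_S n h⟩
  omega

lemma ncard_prod {α β : Type*} (s : Set α) (t : Set β) :
    (s ×ˢ t).ncard = s.ncard * t.ncard := by
  rw [← Nat.card_coe_set_eq, ← Nat.card_coe_set_eq, ← Nat.card_coe_set_eq,
    Nat.card_congr (Equiv.Set.prod s t), Nat.card_prod]

lemma card_divisors_le (n : ℕ) (hn : 0 < n) : n.divisors.card ≤ 2 * Nat.sqrt n := by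
  set s := Nat.sqrt n with hs
  have key : ∀ d ∈ n.divisors, (if d ≤ s then d else s + n / d) ∈ Finset.Icc 1 (2 * s) := by
    intro d hd
    rw [Nat.mem_divisors] at hd
    obtain ⟨hdvd, _⟩ := hd
    have hd0 : 0 < d := Nat.pos_of_dvd_of_pos hdvd hn
    have hdn : d ≤ n := Nat.le_of_dvd hn hdvd
    by_cases h : d ≤ s
    · simp only [if_pos h, Finset.mem_Icc]
      omega
    · simp only [if_neg h, Finset.mem_Icc]
      push_neg at h
      have h1 : 1 ≤ n / d := Nat.one_le_div_iff hd0 |>.2 hdn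
      have h2 : n / d ≤ s := by
        have hlt : n < (s + 1) * d := by
          have := Nat.lt_succ_sqrt n
          calc n < (s + 1) * (s + 1) := by nlinarith [Nat.lt_succ_sqrt n]
          _ ≤ (s + 1) * d := Nat.mul_le_mul_left _ (by omega)
        have := (Nat.div_lt_iff_lt_mul hd0).2 hlt
        omega
      omega
  have inj : Set.InjOn (fun d => if d ≤ s then d else s + n / d) n.divisors := by
    intro d hd e he h
    simp only [Finset.mem_coe, Nat.mem_divisors] at hd he
    obtain ⟨hdvd, -⟩ := hd
    obtain ⟨hedvd, -⟩ := he
    have hd0 : 0 < d := Nat.pos_of_dvd_of_pos hdvd hn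
    have he0 : 0 < e := Nat.pos_of_dvd_of_pos hedvd hn
    have hnd1 : 1 ≤ n / d := (Nat.one_le_div_iff hd0).2 (Nat.le_of_dvd hn hdvd)
    have hne1 : 1 ≤ n / e := (Nat.one_le_div_iff he0).2 (Nat.le_of_dvd hn hedvd)
    have h' : (if d ≤ s then d else s + n / d) = (if e ≤ s then e else s + n / e) := h
    by_cases h1 : d ≤ s <;> by_cases h2 : e ≤ s
    · rwa [if_pos h1, if_pos h2] at h'
    · rw [if_pos h1, if_neg h2] at h'; omega
    · rw [if_neg h1, if_pos h2] at h'; omega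
    · rw [if_neg h1, if_neg h2] at h'
      have hde : n / d = n / e := by omega
      have h3 : n / (n / d) = n / (n / e) := by rw [hde]
      rwa [Nat.div_div_self hdvd (by omega), Nat.div_div_self hedvd (by omega)] at h3
  have := Finset.card_le_card_of_injOn _ key inj
  simpa using this

end TAux

open TAux in
theorem T_composite_lt (n : ℕ) (hn : 1 < n) (hcomp : ¬ n.Prime) :
    T n < 1 + T (n - 1) + (2 * Nat.sqrt n - 2) * T (n / n.minFac - 1) := by
  set p := n.minFac with hp
  set s := Nat.sqrt n with hsdef
  have hn0 : 0 < n := by omega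
  have hpprime : p.Prime := Nat.minFac_prime (by omega)
  have hp2 : 2 ≤ p := hpprime.two_le
  have hpdvd : p ∣ n := Nat.minFac_dvd n
  have hqdvd : n / p ∣ n := Nat.div_dvd_of_dvd hpdvd
  have hq1 : 1 ≤ n / p := Nat.one_le_div_iff (by omega) |>.2 (Nat.le_of_dvd hn0 hpdvd)
  have hq2 : 2 ≤ n / p := by
    rcases Nat.lt_or_ge (n / p) 2 with h | h
    · exfalso
      have : n / p = 1 := by omega
      have hnp : n = p := by
        have h2 := Nat.div_mul_cancel hpdvd
        rw [this] at h2
        omega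
      exact hcomp (hnp ▸ hpprime)
    · exact h
  have hple : p ≤ n / p := Nat.minFac_le_of_dvd hq2 hqdvd
  have hqltn : n / p < n := Nat.div_lt_self hn0 (by omega)
  have hpltn : p < n := lt_of_le_of_lt hple hqltn
  have hn4 : 4 ≤ n := by
    have h := Nat.div_mul_cancel hpdvd
    nlinarith [h, hq2, hp2]
  have hs2 : 2 ≤ s := by rw [hsdef]; exact Nat.le_sqrt.2 (by omega)
  have hm1 : 1 ≤ n / p - 1 := by omega
  set m := n / p - 1 with hm
  have hMpos : 1 ≤ (S m).ncard := one_le_ncard_S m hm1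
  -- the set of "decompositions" B ++ [a] with B nonempty and a ≥ 2
  set W : Set (List ℕ × ℕ) := {q | q.1 ≠ [] ∧ 2 ≤ q.2 ∧ q.1 ++ [q.2] ∈ S n} with hW
  have hconcat_injOn : Set.InjOn (fun q : List ℕ × ℕ => q.1 ++ [q.2]) W := by
    rintro ⟨B, a⟩ _ ⟨C, b⟩ _ h
    simp only at h
    have hab : a = b := by
      have := congrArg List.getLast? h
      simpa using this
    subst hab
    have : B = C := List.append_cancel_right h
    simp [this]
  have hWfin : W.Finite := by
    apply Set.Finite.of_finite_image _ hconcat_injOn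
    apply Set.Finite.subset (S_finite n)
    rintro _ ⟨⟨B, a⟩, hq, rfl⟩
    exact hq.2.2
  -- basic facts about elements of W
  have hWfacts : ∀ q ∈ W, q.2 ∣ n ∧ q.2 ≠ n ∧ p ≤ q.2 ∧
      (q.1 ++ List.replicate (n / p - n / q.2) 1) ∈ S m := by
    rintro ⟨B, a⟩ ⟨hBne, ha2, hmem⟩
    obtain ⟨-, hpos, hf⟩ := hmem
    dsimp only at hBne ha2 hpos hf ⊢
    rw [f_concat] at hf
    have hBpos : ∀ x ∈ B, 0 < x := fun x hx => hpos x (by simp [hx])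
    have hfB : 0 < f B := f_pos B hBne hBpos
    have hadvd : a ∣ n := Dvd.intro_left _ hf
    have hfBeq : f B + 1 = n / a := by
      rw [← hf, Nat.mul_div_cancel _ (by omega)]
    have hpa : p ≤ a := Nat.minFac_le_of_dvd ha2 hadvd
    have hna_le : n / a ≤ n / p := Nat.div_le_div_left hpa (by omega)
    have han : a ≠ n := by
      rintro rfl
      rw [Nat.div_self hn0] at hfBeq
      omega
    refine ⟨hadvd, han, hpa, ?_, ?_, ?_⟩
    · simp [hBne]
    · intro x hx
      rcases List.mem_append.1 hx with hx | hx
      · exact hBpos x hx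
      · have := List.eq_of_mem_replicate hx
        omega
    · rw [f_append_replicate]
      omega
  -- the auxiliary injection into pairs (last element, padded prefix)
  set g : List ℕ × ℕ → ℕ × List ℕ :=
    fun q => (q.2, q.1 ++ List.replicate (n / p - n / q.2) 1) with hg
  have hg_injOn : Set.InjOn g W := by
    rintro ⟨B, a⟩ hq ⟨C, b⟩ hr h
    simp only [hg, Prod.mk.injEq] at h
    obtain ⟨rfl, h2⟩ := h
    have : B = C := List.append_cancel_right h2
    simp [this]
  -- Step 1 : covering S n
  have cover : S n ⊆ ({[n]} : Set (List ℕ)) ∪ ((fun B => B ++ [1]) '' S (n - 1)) ∪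
      ((fun q : List ℕ × ℕ => q.1 ++ [q.2]) '' W) := by
    intro l hl
    obtain ⟨hne, hpos, hf⟩ := hl
    set B := l.dropLast with hB
    set a := l.getLast hne with ha
    have hdecomp : B ++ [a] = l := List.dropLast_append_getLast hne
    have hfa : (f B + 1) * a = n := by rw [← hf, ← hdecomp, f_concat]
    have hapos : 0 < a := hpos a (List.getLast_mem hne)
    have hBpos : ∀ x ∈ B, 0 < x := fun x hx =>
      hpos x (List.dropLast_sublist l |>.mem hx)
    by_cases hBne : B = []
    · left; left
      have hfB0 : f B = 0 := by rw [hBne]; rfl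
      rw [hfB0] at hfa
      simp only [Nat.zero_add, one_mul] at hfa
      rw [← hdecomp, hBne, hfa]
      rfl
    · by_cases ha1 : a = 1
      · left; right
        refine ⟨B, ⟨hBne, hBpos, ?_⟩, by rw [← hdecomp, ha1]⟩
        have hfB : 0 < f B := f_pos B hBne hBpos
        rw [ha1, mul_one] at hfa
        omega
      · right
        refine ⟨(B, a), ⟨hBne, by omega, ?_⟩, hdecomp⟩
        rw [hdecomp]
        exact ⟨hne, hpos, hf⟩
  have step1 : (S n).ncard ≤ 1 + (S (n - 1)).ncard + W.ncard := by
    have h1 : (({[n]} : Set (List ℕ)) ∪ ((fun B => B ++ [1]) '' S (n - 1)) ∪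
        ((fun q : List ℕ × ℕ => q.1 ++ [q.2]) '' W)).Finite := by
      refine Set.Finite.union (Set.Finite.union (Set.finite_singleton _) ?_) ?_
      · exact (S_finite (n - 1)).image _
      · exact hWfin.image _
    calc (S n).ncard ≤ _ := Set.ncard_le_ncard cover h1
    _ ≤ (({[n]} : Set (List ℕ)) ∪ ((fun B => B ++ [1]) '' S (n - 1))).ncard +
        ((fun q : List ℕ × ℕ => q.1 ++ [q.2]) '' W).ncard := Set.ncard_union_le _ _
    _ ≤ (({[n]} : Set (List ℕ)).ncard + ((fun B => B ++ [1]) '' S (n - 1)).ncard) +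
        ((fun q : List ℕ × ℕ => q.1 ++ [q.2]) '' W).ncard := by
          have := Set.ncard_union_le ({[n]} : Set (List ℕ)) ((fun B => B ++ [1]) '' S (n - 1))
          omega
    _ ≤ 1 + (S (n - 1)).ncard + W.ncard := by
        have h2 : (({[n]} : Set (List ℕ)).ncard = 1) := Set.ncard_singleton _
        have h3 := Set.ncard_image_le (f := fun B => B ++ [1]) (S_finite (n - 1))
        have h4 := Set.ncard_image_le (f := fun q : List ℕ × ℕ => q.1 ++ [q.2]) hWfin
        omega
  -- Step 2 : bounding W.ncard
  have step2 : W.ncard < (2 * s - 2) * (S m).ncard := by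
    by_cases hsq : p = n / p
    -- case n = p^2 : the only possible last element is p
    · have hlast : ∀ q ∈ W, q.2 = p := by
        intro q hq
        obtain ⟨hdvd, hne, hpge, -⟩ := hWfacts q hq
        have hq2' : 2 ≤ q.2 := hq.2.1
        have hnpp : n = p ^ 2 := by
          have := Nat.div_mul_cancel hpdvd
          rw [← hsq] at this
          rw [← this]; ring
        rw [hnpp] at hdvd
        obtain ⟨i, hi, hqi⟩ := (Nat.dvd_prime_pow hpprime).1 hdvd
        interval_cases i
        · simp at hqi; omega
        · simpa using hqi
        · exfalso
          apply hne
          rw [hqi, hnpp]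
      have hsub : W.ncard ≤ (S m).ncard := by
        refine Set.ncard_le_ncard_of_injOn
          (fun q => q.1 ++ List.replicate (n / p - n / q.2) 1) ?_ ?_ (S_finite m)
        · intro q hq
          exact (hWfacts q hq).2.2.2
        · intro q hq r hr h
          have h1 : q.2 = r.2 := by rw [hlast q hq, hlast r hr]
          have hgq : g q = g r := by
            simp only [hg, Prod.mk.injEq]
            exact ⟨h1, h⟩
          exact hg_injOn hq hr hgq
      have h2 : 2 ≤ 2 * s - 2 := by omega
      calc W.ncard ≤ (S m).ncard := hsub
      _ < 2 * (S m).ncard := by omega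
      _ ≤ (2 * s - 2) * (S m).ncard := Nat.mul_le_mul_right _ h2
    -- case p < n / p
    · have hplt : p < n / p := lt_of_le_of_ne hple hsq
      set D : Finset ℕ := n.divisors \ {1, n} with hD
      set pt : ℕ × List ℕ := (n / p, [m]) with hpt
      set Tgt : Set (ℕ × List ℕ) := ((D : Set ℕ) ×ˢ S m) \ {pt} with hT
      have hptD : n / p ∈ D := by
        rw [hD, Finset.mem_sdiff, Nat.mem_divisors]
        refine ⟨⟨hqdvd, by omega⟩, ?_⟩
        simp only [Finset.mem_insert, Finset.mem_singleton]
        push_neg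
        omega
      have hmemprod : pt ∈ (D : Set ℕ) ×ˢ S m :=
        Set.mem_prod.2 ⟨Finset.mem_coe.2 hptD, singleton_mem_S m hm1⟩
      have hprodfin : ((D : Set ℕ) ×ˢ S m).Finite :=
        Set.Finite.prod (D.finite_toSet) (S_finite m)
      have hmaps : ∀ q ∈ W, g q ∈ Tgt := by
        intro q hq
        obtain ⟨hdvd, hne, hpge, hmem⟩ := hWfacts q hq
        have hq2' : 2 ≤ q.2 := hq.2.1
        have hq2D : q.2 ∈ D := by
          rw [hD, Finset.mem_sdiff, Nat.mem_divisors]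
          refine ⟨⟨hdvd, by omega⟩, ?_⟩
          simp only [Finset.mem_insert, Finset.mem_singleton]
          push_neg
          exact ⟨by omega, hne⟩
        constructor
        · exact Set.mem_prod.2 ⟨Finset.mem_coe.2 hq2D, hmem⟩
        · -- g q ≠ pt
          simp only [Set.mem_singleton_iff, hpt, hg, Prod.mk.injEq, not_and]
          intro hqp
          have hk : 1 ≤ n / p - n / q.2 := by
            rw [hqp, Nat.div_div_self hpdvd (by omega)]
            omega
          intro habs
          have hlen := congrArg List.length habs
          have hq1ne : q.1 ≠ [] := hq.1
          have : 1 ≤ q.1.length := List.length_pos_iff.2 hq1ne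
          simp only [List.length_append, List.length_replicate, List.length_singleton] at hlen
          omega
      have hTfin : Tgt.Finite := hprodfin.diff
      have hcard1 : W.ncard ≤ Tgt.ncard :=
        Set.ncard_le_ncard_of_injOn g hmaps hg_injOn hTfin
      have hcard2 : Tgt.ncard = D.card * (S m).ncard - 1 := by
        rw [hT, Set.ncard_diff_singleton_of_mem hmemprod, ncard_prod,
          Set.ncard_coe_finset]
      have hDcard : D.card ≤ 2 * s - 2 := by
        have hsubD : ({1, n} : Finset ℕ) ⊆ n.divisors := by
          intro x hx
          simp only [Finset.mem_insert, Finset.mem_singleton] at hx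
          rcases hx with rfl | rfl <;> simp [Nat.mem_divisors, hn0.ne']
        have hsd := Finset.card_sdiff_of_subset hsubD
        rw [← hD] at hsd
        have hpair : ({1, n} : Finset ℕ).card = 2 := by
          rw [Finset.card_insert_of_notMem (by simp; omega), Finset.card_singleton]
        have hdl := card_divisors_le n hn0
        rw [← hsdef] at hdl
        omega
      have hDpos : 1 ≤ D.card := by
        have : p ∈ D := by
          simp only [hD, Finset.mem_sdiff, Nat.mem_divisors, Finset.mem_insert,
            Finset.mem_singleton]
          push_neg
          exact ⟨⟨hpdvd, by omega⟩, by omega, by omega⟩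
        exact Finset.card_pos.2 ⟨p, this⟩
      have hge1 : 1 ≤ D.card * (S m).ncard := Nat.one_le_iff_ne_zero.2 (by positivity)
      calc W.ncard ≤ Tgt.ncard := hcard1
      _ = D.card * (S m).ncard - 1 := hcard2
      _ < D.card * (S m).ncard := by omega
      _ ≤ (2 * s - 2) * (S m).ncard := Nat.mul_le_mul_right _ hDcard
  -- Assemble
  rw [T_eq_ncard n (by omega), T_eq_ncard (n - 1) (by omega), T_eq_ncard (n / p - 1) (by omega),
    ← hm]
  omega
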